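/- arXiv:2503.18453 — 3 statements merged into one kernel-verified Lean document; each statement's English description precedes it below -/
import Mathlib

section
/- For every integer k ≥ 1, every integer N ≥ k, and all σ,τ ∈ P(k), writing d = |D(σ∨τ)|, the centered Weingarten function satisfies W̊g_k(σ,τ,N) = Σ_{j=#(σ∧τ)}^{k} ( Σ_{π ≤ σ∧τ, #π = j} μ(π,σ)·μ(π,τ) ) · Σ_{i=0}^{j−d} binom(j−d,i)·N^{−i}·a_{j−i}(N). -/
open Finset

noncomputable section

namespace WgPerm

/-- Number of blocks of the partition of `α` corresponding to the setoid `s`. -/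
def numBlocks {α : Type*} (s : Setoid α) : ℕ := Nat.card (Quotient s)

/-- Number of blocks of `s` contained in the block `B` of `t` (meaningful when `s ≤ t`). -/
def lam {α : Type*} (s t : Setoid α) (B : Quotient t) : ℕ :=
  Nat.card {c : Quotient s // Quotient.mk t (Quotient.out c) = B}

/-- Möbius function of the partition lattice:
`μ(s,t) = ∏_B (−1)^{λ_B−1} (λ_B−1)!` over the blocks `B` of `t`. -/
def mobius {α : Type*} (s t : Setoid α) : ℤ :=
  ∏ᶠ B : Quotient t, (-1 : ℤ) ^ (lam s t B - 1) * (Nat.factorial (lam s t B - 1) : ℤ)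

/-- Kernel partition `Π_i` of a tuple `i`. -/
def kerP {k N : ℕ} (i : Fin k → Fin N) : Setoid (Fin k) := Setoid.ker i

/-- `(i,j)` entry of the permutation matrix of `g`. -/
def permEntry {N : ℕ} (g : Equiv.Perm (Fin N)) (i j : Fin N) : ℝ :=
  if g i = j then 1 else 0

/-- The Weingarten function for the symmetric group `S_N`. -/
def Wg (k N : ℕ) (σ τ : Setoid (Fin k)) : ℝ :=
  ∑ᶠ π ∈ {π : Setoid (Fin k) | π ≤ σ ⊓ τ},
    ((mobius π σ * mobius π τ : ℤ) : ℝ) / (Nat.descFactorial N (numBlocks π) : ℝ)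

/-- `|D(π)|`: the number of singleton blocks of `π`. -/
def numSingletons {k : ℕ} (π : Setoid (Fin k)) : ℕ :=
  Nat.card {j : Fin k | ∀ m, π.r j m → m = j}

/-- The centered Weingarten function for the symmetric group `S_N`. -/
def cWg (k N : ℕ) (σ τ : Setoid (Fin k)) : ℝ :=
  ∑ i ∈ Finset.range (numSingletons (σ ⊔ τ) + 1),
    ((numSingletons (σ ⊔ τ)).choose i : ℝ) * (-1 : ℝ) ^ i *
      ∑ᶠ π ∈ {π : Setoid (Fin k) | π ≤ σ ⊓ τ},
        ((mobius π σ * mobius π τ : ℤ) : ℝ) * ((N : ℝ) ^ i)⁻¹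
          / (Nat.descFactorial N (numBlocks π - i) : ℝ)

/-- `a_k(N) = Σ_{l=0}^{k} binom(k,l)·(−N)^{−(k−l)}/(N)_l`. -/
def aSeq (k N : ℕ) : ℝ :=
  ∑ l ∈ Finset.range (k + 1),
    (k.choose l : ℝ) * ((-(N : ℝ)) ^ (k - l))⁻¹ / (Nat.descFactorial N l : ℝ)



private lemma binId (m : ℕ) : ∀ j t : ℕ, m ≤ j → t ≤ j →
    ∑ i ∈ range (t + 1), (-1 : ℤ) ^ i * (m.choose i) * ((j - i).choose (t - i))
      = ((j - m).choose t) := by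
  induction m with
  | zero =>
      intro j t hj ht
      rw [Finset.sum_eq_single 0]
      · simp
      · intro i _ hi
        rw [Nat.choose_eq_zero_of_lt (Nat.pos_of_ne_zero hi)]
        push_cast; ring
      · intro h; simp at h
  | succ m ih =>
      intro j t hj ht
      match t with
      | 0 => simp
      | t' + 1 =>
        have IH1 := ih (j - 1) t' (by omega) (by omega)
        have IH2 := ih j (t' + 1) (by omega) ht
        rw [Finset.sum_range_succ'] at IH2 ⊢
        have hsplit : ∀ i ∈ range (t' + 1),
            (-1 : ℤ) ^ (i+1) * ((m+1).choose (i+1)) * ((j - (i+1)).choose (t' + 1 - (i+1)))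
            = -((-1 : ℤ) ^ i * (m.choose i) * ((j - 1 - i).choose (t' - i)))
              + (-1 : ℤ) ^ (i+1) * (m.choose (i+1)) * ((j - (i+1)).choose (t' + 1 - (i+1))) := by
          intro i _
          have e1 : j - (i+1) = j - 1 - i := by omega
          have e2 : t' + 1 - (i+1) = t' - i := by omega
          rw [Nat.choose_succ_succ, e1, e2]
          push_cast; ring
        rw [Finset.sum_congr rfl hsplit, Finset.sum_add_distrib, Finset.sum_neg_distrib, IH1]
        have hP : (((j - m).choose (t' + 1) : ℤ)) =
            ((j - (m+1)).choose t') + ((j - (m+1)).choose (t' + 1)) := by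
          have hx : j - m = (j - (m+1)) + 1 := by omega
          rw [hx, Nat.choose_succ_succ]; push_cast; ring
        have hd : j - 1 - m = j - (m+1) := by omega
        rw [hd]
        simp only [pow_zero, Nat.choose_zero_right, Nat.cast_one, one_mul, Nat.sub_zero] at IH2 ⊢
        linarith [IH2, hP]

private lemma aSeq_eq (m N : ℕ) : aSeq m N =
    ∑ i ∈ range (m + 1),
      (m.choose i : ℝ) * (-1 : ℝ) ^ i * ((N : ℝ) ^ i)⁻¹ / (Nat.descFactorial N (m - i) : ℝ) := by
  have hrefl := Finset.sum_range_reflect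
    (fun l => (m.choose l : ℝ) * ((-(N : ℝ)) ^ (m - l))⁻¹ / (Nat.descFactorial N l : ℝ)) (m + 1)
  rw [aSeq, ← hrefl]
  refine Finset.sum_congr rfl fun i hi => ?_
  have him : i ≤ m := by simpa [Nat.lt_succ_iff] using mem_range.mp hi
  have e0 : m + 1 - 1 - i = m - i := by omega
  have e1 : m - (m - i) = i := Nat.sub_sub_self him
  have e2 : m.choose (m - i) = m.choose i := Nat.choose_symm him
  have e3 : ((-(N : ℝ)) ^ i)⁻¹ = (-1 : ℝ) ^ i * ((N : ℝ) ^ i)⁻¹ := by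
    rw [neg_eq_neg_one_mul, mul_pow, mul_inv, ← inv_pow, inv_neg, inv_one]
  rw [e0, e1, e2, e3]
  ring

private lemma keyId (N j d : ℕ) (hdj : d ≤ j) :
    ∑ i ∈ range (d + 1),
        (d.choose i : ℝ) * (-1 : ℝ) ^ i * (((N : ℝ) ^ i)⁻¹ / (Nat.descFactorial N (j - i) : ℝ))
      = ∑ i ∈ range (j - d + 1),
        ((j - d).choose i : ℝ) * ((N : ℝ) ^ i)⁻¹ * aSeq (j - i) N := by
  rw [Finset.sum_subset (Finset.range_subset_range.mpr (by omega : d + 1 ≤ j + 1))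
    (fun t _ ht => by
      have : d < t := by simpa [Nat.lt_succ_iff, not_lt] using ht
      rw [Nat.choose_eq_zero_of_lt this]; simp)]
  simp only [aSeq_eq]
  rw [Finset.sum_subset (Finset.range_subset_range.mpr (by omega : j - d + 1 ≤ j + 1))
    (fun i _ hi => by
      have : j - d < i := by simpa [Nat.lt_succ_iff, not_lt] using hi
      rw [Nat.choose_eq_zero_of_lt this]; simp)]
  have hshape : ∀ i ∈ range (j + 1),
      ((j - d).choose i : ℝ) * ((N : ℝ) ^ i)⁻¹ *
        ∑ l ∈ range (j - i + 1),
          ((j - i).choose l : ℝ) * (-1 : ℝ) ^ l * ((N : ℝ) ^ l)⁻¹ /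
            (Nat.descFactorial N (j - i - l) : ℝ)
      = ∑ l ∈ range (j + 1 - i),
          ((j - d).choose i : ℝ) * ((N : ℝ) ^ i)⁻¹ *
            (((j - i).choose l : ℝ) * (-1 : ℝ) ^ l * ((N : ℝ) ^ l)⁻¹ /
              (Nat.descFactorial N (j - i - l) : ℝ)) := by
    intro i hi
    have : j - i + 1 = j + 1 - i := by
      have := mem_range.mp hi; omega
    rw [← this, Finset.mul_sum]
  rw [Finset.sum_congr rfl hshape, ← Finset.sum_range_diag_flip (j + 1)
    (fun i l => ((j - d).choose i : ℝ) * ((N : ℝ) ^ i)⁻¹ *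
      (((j - i).choose l : ℝ) * (-1 : ℝ) ^ l * ((N : ℝ) ^ l)⁻¹ /
        (Nat.descFactorial N (j - i - l) : ℝ)))]
  refine Finset.sum_congr rfl fun t htm => ?_
  have htj : t ≤ j := by simpa [Nat.lt_succ_iff] using mem_range.mp htm
  have hterm : ∀ i ∈ range (t + 1),
      ((j - d).choose i : ℝ) * ((N : ℝ) ^ i)⁻¹ *
        (((j - i).choose (t - i) : ℝ) * (-1 : ℝ) ^ (t - i) * ((N : ℝ) ^ (t - i))⁻¹ /
          (Nat.descFactorial N (j - i - (t - i)) : ℝ))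
      = ((-1 : ℝ) ^ i * ((j - d).choose i : ℝ) * ((j - i).choose (t - i) : ℝ)) *
          ((-1 : ℝ) ^ t * (((N : ℝ) ^ t)⁻¹ / (Nat.descFactorial N (j - t) : ℝ))) := by
    intro i hiM
    have hit : i ≤ t := by simpa [Nat.lt_succ_iff] using mem_range.mp hiM
    have e1 : j - i - (t - i) = j - t := by omega
    have e3 : ((N : ℝ) ^ i)⁻¹ * ((N : ℝ) ^ (t - i))⁻¹ = ((N : ℝ) ^ t)⁻¹ := by
      rw [← mul_inv, ← pow_add]; congr 2; omega
    have e2' : (-1 : ℝ) ^ (t - i) = (-1 : ℝ) ^ t * (-1 : ℝ) ^ i := by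
      have e2 : (-1 : ℝ) ^ (t - i) * (-1 : ℝ) ^ i = (-1 : ℝ) ^ t := by
        rw [← pow_add]; congr 1; omega
      rw [← e2, mul_assoc, ← pow_add]
      simp [← two_mul, pow_mul]
    rw [e1, e2', ← e3]
    ring
  rw [Finset.sum_congr rfl hterm, ← Finset.sum_mul]
  have hb := binId (j - d) j t (Nat.sub_le j d) htj
  have hb' : ∑ i ∈ range (t + 1),
      ((-1 : ℝ) ^ i * ((j - d).choose i : ℝ) * ((j - i).choose (t - i) : ℝ))
      = ((j - (j - d)).choose t : ℝ) := by
    exact_mod_cast congrArg (fun z : ℤ => (z : ℝ)) hb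
  have hjd : j - (j - d) = d := by omega
  rw [hb', hjd]
  ring

private lemma numBlocks_le_card {k : ℕ} (π : Setoid (Fin k)) : numBlocks π ≤ k := by
  simpa [numBlocks] using Nat.card_le_card_of_surjective (Quotient.mk π) (Quot.exists_rep)

private lemma numBlocks_le_of_le {k : ℕ} {s t : Setoid (Fin k)} (h : s ≤ t) :
    numBlocks t ≤ numBlocks s := by
  refine Nat.card_le_card_of_surjective (Quotient.map' id (fun x y hxy => h hxy)) ?_
  exact fun q => Quotient.inductionOn q (fun a => ⟨Quotient.mk s a, rfl⟩)

private lemma numSingletons_le {k : ℕ} {π ρ : Setoid (Fin k)} (h : π ≤ ρ) :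
    numSingletons ρ ≤ numBlocks π := by
  refine Nat.card_le_card_of_injective
    (fun j : {j : Fin k | ∀ m, ρ.r j m → m = j} => Quotient.mk π j.1) ?_
  rintro ⟨a, ha⟩ ⟨b, hb⟩ hab
  have : π.r a b := Quotient.exact hab
  exact Subtype.ext ((ha b (h this)).symm ▸ rfl)

/-- reformulation of the centered Weingarten function via `a_k(N)`. -/
theorem stmt10 (k N : ℕ) (hk : 1 ≤ k) (hN : k ≤ N) (σ τ : Setoid (Fin k)) :
    cWg k N σ τ =
      ∑ j ∈ Finset.Icc (numBlocks (σ ⊓ τ)) k,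
        (∑ᶠ π ∈ {π : Setoid (Fin k) | π ≤ σ ⊓ τ ∧ numBlocks π = j},
            ((mobius π σ * mobius π τ : ℤ) : ℝ)) *
          ∑ i ∈ Finset.range (j - numSingletons (σ ⊔ τ) + 1),
            ((j - numSingletons (σ ⊔ τ)).choose i : ℝ) * ((N : ℝ) ^ i)⁻¹ *
              aSeq (j - i) N := by
  classical
  haveI : Finite (Setoid (Fin k)) := Finite.of_injective (fun s : Setoid (Fin k) => s.r)
    (fun a b h => Setoid.ext (fun x y => iff_of_eq (congrFun (congrFun h x) y)))
  set d := numSingletons (σ ⊔ τ) with hdd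
  have hS : {π : Setoid (Fin k) | π ≤ σ ⊓ τ}.Finite := Set.toFinite _
  have hmem : ∀ π ∈ hS.toFinset, numBlocks π ∈ Finset.Icc (numBlocks (σ ⊓ τ)) k := by
    intro π hπ
    rw [Set.Finite.mem_toFinset] at hπ
    exact Finset.mem_Icc.mpr ⟨numBlocks_le_of_le hπ, numBlocks_le_card π⟩
  have hdle : ∀ π ∈ hS.toFinset, d ≤ numBlocks π := by
    intro π hπ
    rw [Set.Finite.mem_toFinset] at hπ
    exact numSingletons_le (le_trans hπ (le_trans inf_le_left le_sup_left))
  have hRj : ∀ j : ℕ, (∑ᶠ π ∈ {π : Setoid (Fin k) | π ≤ σ ⊓ τ ∧ numBlocks π = j},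
      ((mobius π σ * mobius π τ : ℤ) : ℝ))
      = ∑ π ∈ hS.toFinset.filter (fun π => numBlocks π = j),
          ((mobius π σ * mobius π τ : ℤ) : ℝ) := by
    intro j
    rw [finsum_mem_eq_finite_toFinset_sum _ (Set.toFinite _)]
    refine Finset.sum_congr ?_ (fun _ _ => rfl)
    ext π
    simp [Set.Finite.mem_toFinset, Finset.mem_filter]
  have hL : ∀ i : ℕ, (∑ᶠ π ∈ {π : Setoid (Fin k) | π ≤ σ ⊓ τ},
      ((mobius π σ * mobius π τ : ℤ) : ℝ) * ((N : ℝ) ^ i)⁻¹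
        / (Nat.descFactorial N (numBlocks π - i) : ℝ))
      = ∑ π ∈ hS.toFinset, ((mobius π σ * mobius π τ : ℤ) : ℝ) * ((N : ℝ) ^ i)⁻¹
          / (Nat.descFactorial N (numBlocks π - i) : ℝ) :=
    fun i => finsum_mem_eq_finite_toFinset_sum _ hS
  rw [cWg]
  simp only [hL, hRj, ← hdd]
  -- reorganize the left-hand side
  rw [show (∑ i ∈ Finset.range (d + 1), (d.choose i : ℝ) * (-1 : ℝ) ^ i *
      ∑ π ∈ hS.toFinset, ((mobius π σ * mobius π τ : ℤ) : ℝ) * ((N : ℝ) ^ i)⁻¹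
        / (Nat.descFactorial N (numBlocks π - i) : ℝ))
      = ∑ π ∈ hS.toFinset, ∑ i ∈ Finset.range (d + 1),
          (d.choose i : ℝ) * (-1 : ℝ) ^ i *
            (((mobius π σ * mobius π τ : ℤ) : ℝ) * ((N : ℝ) ^ i)⁻¹
              / (Nat.descFactorial N (numBlocks π - i) : ℝ)) from by
    rw [Finset.sum_comm]
    exact Finset.sum_congr rfl fun i _ => by rw [Finset.mul_sum]]
  -- reorganize the right-hand side
  have hR : ∑ j ∈ Finset.Icc (numBlocks (σ ⊓ τ)) k,
      (∑ π ∈ hS.toFinset.filter (fun π => numBlocks π = j),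
          ((mobius π σ * mobius π τ : ℤ) : ℝ)) *
        ∑ i ∈ Finset.range (j - d + 1),
          ((j - d).choose i : ℝ) * ((N : ℝ) ^ i)⁻¹ * aSeq (j - i) N
      = ∑ π ∈ hS.toFinset, ((mobius π σ * mobius π τ : ℤ) : ℝ) *
          ∑ i ∈ Finset.range (numBlocks π - d + 1),
            ((numBlocks π - d).choose i : ℝ) * ((N : ℝ) ^ i)⁻¹ * aSeq (numBlocks π - i) N := by
    rw [← Finset.sum_fiberwise_of_maps_to hmem
      (fun π => ((mobius π σ * mobius π τ : ℤ) : ℝ) *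
        ∑ i ∈ Finset.range (numBlocks π - d + 1),
          ((numBlocks π - d).choose i : ℝ) * ((N : ℝ) ^ i)⁻¹ * aSeq (numBlocks π - i) N)]
    refine Finset.sum_congr rfl fun j _ => ?_
    rw [Finset.sum_mul]
    refine Finset.sum_congr rfl fun π hπ => ?_
    have : numBlocks π = j := (Finset.mem_filter.mp hπ).2
    rw [this]
  rw [hR]
  refine Finset.sum_congr rfl fun π hπ => ?_
  have hkey := keyId N (numBlocks π) d (hdle π hπ)
  calc ∑ i ∈ Finset.range (d + 1),
        (d.choose i : ℝ) * (-1 : ℝ) ^ i *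
          (((mobius π σ * mobius π τ : ℤ) : ℝ) * ((N : ℝ) ^ i)⁻¹
            / (Nat.descFactorial N (numBlocks π - i) : ℝ))
      = ((mobius π σ * mobius π τ : ℤ) : ℝ) *
          ∑ i ∈ Finset.range (d + 1),
            (d.choose i : ℝ) * (-1 : ℝ) ^ i *
              (((N : ℝ) ^ i)⁻¹ / (Nat.descFactorial N (numBlocks π - i) : ℝ)) := by
        rw [Finset.mul_sum]
        exact Finset.sum_congr rfl fun i _ => by ring
    _ = _ := by rw [hkey]


end WgPerm

end
end

section
/- Fix an integer k ≥ 1 and σ,τ ∈ P(k), and set d = |D(σ∨τ)|. If d is odd and d ≠ k, then N^{#(σ∧τ)+(d+1)/2}·W̊g_k(σ,τ,N) converges, as N → ∞, to μ(σ∧τ,σ)·μ(σ∧τ,τ)·(#(σ∧τ) − d/3 − 2/3)·d!!, where (2m−1)!! = ∏_{j=1}^{m}(2j−1) and (−1)!! = 1. -/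
open Finset

noncomputable section

namespace WgPerm

section WgAuxSection
open Polynomial Filter

namespace WgAux

/-- falling-factorial basis polynomial `x(x-1)...(x-m+1)` -/
def bpoly (m : ℕ) : ℝ[X] := ∏ j ∈ range m, (X - C (j:ℝ))

/-- alternating binomial sum of evaluations -/
def altsum (d : ℕ) (p : ℝ[X]) : ℝ := ∑ i ∈ range (d+1), (-1:ℝ)^i * (d.choose i) * p.eval (i:ℝ)

lemma bpoly_monic (m : ℕ) : (bpoly m).Monic :=
  monic_prod_of_monic _ _ (fun j _ => monic_X_sub_C _)

lemma natDegree_bpoly (m : ℕ) : (bpoly m).natDegree = m := by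
  rw [bpoly, natDegree_prod _ _ (fun j _ => X_sub_C_ne_zero _)]
  simp only [natDegree_X_sub_C, sum_const, card_range, smul_eq_mul, mul_one]

lemma bpoly_succ (m : ℕ) : bpoly (m+1) = bpoly m * (X - C (m:ℝ)) := prod_range_succ _ _

lemma bpoly_comp (m : ℕ) : (bpoly (m+1)).comp (X + 1) = (X + 1) * bpoly m := by
  induction m with
  | zero =>
    simp [bpoly, bpoly_succ, sub_comp]
  | succ m ih =>
    rw [bpoly_succ (m+1), mul_comp, ih, bpoly_succ m]
    rw [sub_comp, X_comp, C_comp, Nat.cast_succ, C_add, C_1]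
    ring

lemma bpoly_diff (m : ℕ) :
    (bpoly (m+1)).comp (X + 1) - bpoly (m+1) = ((m:ℝ)+1) • bpoly m := by
  rw [bpoly_comp, bpoly_succ, smul_eq_C_mul, C_add, C_1]
  ring

lemma altsum_succ (d : ℕ) (p : ℝ[X]) :
    altsum (d+1) p = altsum d (p - p.comp (X + 1)) := by
  have key : ∀ q : ℝ[X], ∀ i : ℕ, ((i:ℝ)+1) = ((i+1 : ℕ) : ℝ) := by intro q i; push_cast; ring
  have e1 : altsum (d+1) p = p.eval 0
      - (∑ i ∈ range (d+1), (-1:ℝ)^i * (d.choose i) * p.eval ((i:ℝ)+1))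
      - (∑ i ∈ range (d+1), (-1:ℝ)^i * (d.choose (i+1)) * p.eval ((i:ℝ)+1)) := by
    rw [altsum, sum_range_succ' _ (d+1)]
    have : ∀ i ∈ range (d+1), (-1:ℝ)^(i+1) * (((d+1).choose (i+1) : ℕ) : ℝ) * p.eval (((i+1:ℕ)):ℝ)
        = -((-1:ℝ)^i * (d.choose i) * p.eval ((i:ℝ)+1))
          - (-1:ℝ)^i * (d.choose (i+1)) * p.eval ((i:ℝ)+1) := by
      intro i _
      rw [Nat.choose_succ_succ]
      push_cast
      ring
    rw [sum_congr rfl this, sum_sub_distrib, sum_neg_distrib]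
    simp only [Nat.choose_zero_right, Nat.cast_one, Nat.cast_zero, pow_zero]
    push_cast
    ring
  have e2 : altsum d p = p.eval 0
      - ∑ i ∈ range (d+1), (-1:ℝ)^i * (d.choose (i+1)) * p.eval ((i:ℝ)+1) := by
    rw [altsum, sum_range_succ' _ d]
    have h0 : ∑ i ∈ range (d+1), (-1:ℝ)^i * (d.choose (i+1)) * p.eval ((i:ℝ)+1)
        = ∑ i ∈ range d, (-1:ℝ)^i * (d.choose (i+1)) * p.eval ((i:ℝ)+1) := by
      rw [sum_range_succ, Nat.choose_succ_self]
      push_cast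
      ring
    rw [h0]
    have : ∀ i ∈ range d, (-1:ℝ)^(i+1) * ((d.choose (i+1) : ℕ) : ℝ) * p.eval (((i+1:ℕ)):ℝ)
        = -((-1:ℝ)^i * (d.choose (i+1)) * p.eval ((i:ℝ)+1)) := by
      intro i _
      push_cast
      ring
    rw [sum_congr rfl this, sum_neg_distrib]
    simp only [Nat.choose_zero_right, Nat.cast_one, Nat.cast_zero, pow_zero]
    push_cast
    ring
  have e3 : altsum d (p - p.comp (X+1)) = altsum d p
      - ∑ i ∈ range (d+1), (-1:ℝ)^i * (d.choose i) * p.eval ((i:ℝ)+1) := by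
    rw [altsum, altsum]
    rw [← sum_sub_distrib]
    apply sum_congr rfl
    intro i _
    simp [eval_comp]
    ring
  rw [e1, e3, e2]
  ring

lemma altsum_smul (d : ℕ) (a : ℝ) (p : ℝ[X]) : altsum d (a • p) = a * altsum d p := by
  rw [altsum, altsum, mul_sum]
  apply sum_congr rfl
  intro i _
  simp
  ring

lemma altsum_zero_poly (d : ℕ) : altsum d 0 = 0 := by
  simp [altsum]

lemma altsum_eq_zero_of_natDegree_lt (d : ℕ) (p : ℝ[X]) (hp : p.natDegree < d) :
    altsum d p = 0 := by
  induction d generalizing p with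
  | zero => omega
  | succ d ih =>
    rw [altsum_succ]
    rcases eq_or_ne p 0 with rfl | hne
    · simpa using altsum_zero_poly d
    rcases Nat.eq_zero_or_pos p.natDegree with h0 | hpos
    · -- p is a constant
      obtain ⟨a, rfl⟩ := natDegree_eq_zero.mp h0
      rw [C_comp, sub_self]; exact altsum_zero_poly d
    · have h1 : ((X:ℝ[X])+1).natDegree = 1 := by
        simpa using natDegree_X_add_C (1:ℝ)
      have hlc : (p.comp (X+1)).leadingCoeff = p.leadingCoeff := by
        have hm : ((X:ℝ[X])+1).Monic := by simpa using monic_X_add_C (1:ℝ)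
        rw [leadingCoeff_comp (by rw [h1]; exact one_ne_zero), hm.leadingCoeff, one_pow, mul_one]
      have hcne : p.comp (X+1) ≠ 0 := by
        intro h
        apply hne
        apply leadingCoeff_eq_zero.mp
        rw [← hlc, h, leadingCoeff_zero]
      have hnd : (p.comp (X+1)).natDegree = p.natDegree := by
        rw [natDegree_comp, h1, mul_one]
      have hd : (p.comp (X+1)).degree = p.degree := by
        rw [degree_eq_natDegree hcne, degree_eq_natDegree hne, hnd]
      have hdeg : (p - p.comp (X+1)).degree < p.degree := degree_sub_lt hd.symm hne hlc.symm
      rcases eq_or_ne (p - p.comp (X+1)) 0 with hz | hz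
      · rw [hz]; exact altsum_zero_poly d
      · apply ih
        have := natDegree_lt_natDegree hz hdeg
        omega

lemma altsum_bpoly_self (d : ℕ) : altsum d (bpoly d) = (-1:ℝ)^d * d.factorial := by
  induction d with
  | zero => simp [altsum, bpoly]
  | succ d ih =>
    rw [altsum_succ]
    have h2 : bpoly (d+1) - (bpoly (d+1)).comp (X+1) = (-((d:ℝ)+1)) • bpoly d := by
      rw [neg_smul, ← bpoly_diff d]
      ring
    rw [h2, altsum_smul, ih]
    push_cast [Nat.factorial_succ]
    ring

lemma altsum_bpoly_succ (d : ℕ) : altsum d (bpoly (d+1)) = 0 := by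
  rw [altsum]
  apply sum_eq_zero
  intro i hi
  have : (bpoly (d+1)).eval (i:ℝ) = 0 := by
    rw [bpoly, eval_prod]
    apply prod_eq_zero (Finset.mem_range.mpr (by
      exact lt_of_lt_of_le (Finset.mem_range.mp hi) (le_refl _)))
    simp
  rw [this]; ring

/-- coefficients (in the falling-factorial basis) of the polynomials `Q_r` with
`Q_r(i) = [ε^r] ∏_{j=1}^{i} (1 - (α-j)ε)`. -/
def qc (α : ℝ) : ℕ → ℕ → ℝ
  | 0, 0 => 1
  | 0, _+1 => 0
  | _+1, 0 => 0
  | r+1, s+1 => ((if s = 0 then 0 else qc α r (s-1)) - (α - (s+1)) * qc α r s) / (s+1)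

lemma qc_zero_right (α : ℝ) (r : ℕ) : qc α (r+1) 0 = 0 := rfl

lemma qc_succ (α : ℝ) (r s : ℕ) :
    qc α (r+1) (s+1) = ((if s = 0 then 0 else qc α r (s-1)) - (α - (s+1)) * qc α r s) / (s+1) := rfl

lemma qc_zero_zero (α : ℝ) : qc α 0 0 = 1 := rfl

lemma qc_eq_zero (α : ℝ) : ∀ r t, 2*r < t → qc α r t = 0 := by
  intro r
  induction r with
  | zero => intro t ht; match t, ht with | (s+1), _ => rfl
  | succ r ih =>
    intro t ht
    match t, ht with
    | (s+1), ht =>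
      rw [qc_succ]
      have h1 : qc α r s = 0 := ih s (by omega)
      have h2 : (if s = 0 then (0:ℝ) else qc α r (s-1)) = 0 := by
        rcases Nat.eq_zero_or_pos s with rfl | hs
        · simp
        · rw [if_neg (by omega)]
          exact ih (s-1) (by omega)
      rw [h1, h2]
      ring

def Qpoly (α : ℝ) (r : ℕ) : ℝ[X] := ∑ t ∈ range (2*r+1), qc α r t • bpoly t

lemma Qpoly_ext (α : ℝ) (r M : ℕ) (hM : 2*r+1 ≤ M) :
    Qpoly α r = ∑ t ∈ range M, qc α r t • bpoly t := by
  rw [Qpoly]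
  apply sum_subset (range_subset_range.mpr hM)
  intro t _ ht
  rw [qc_eq_zero α r t (by simp at ht; omega), zero_smul]

lemma natDegree_Qpoly_le (α : ℝ) (r : ℕ) : (Qpoly α r).natDegree ≤ 2*r := by
  apply natDegree_sum_le_of_forall_le
  intro t ht
  apply le_trans (natDegree_smul_le _ _)
  rw [natDegree_bpoly]
  simp at ht
  omega

lemma Qpoly_zero (α : ℝ) : Qpoly α 0 = 1 := by
  simp [Qpoly, qc_zero_zero, bpoly]

/-- The discrete-derivative identity `Q_{r+1}(x+1) - Q_{r+1}(x) = (x - (α-1))·Q_r(x)`. -/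
lemma Qpoly_diff (α : ℝ) (r : ℕ) :
    (Qpoly α (r+1)).comp (X+1) - Qpoly α (r+1) = (X - C (α-1)) * Qpoly α r := by
  have hcomp : (Qpoly α (r+1)).comp (X+1) = ∑ t ∈ range (2*(r+1)+1), qc α (r+1) t • (bpoly t).comp (X+1) := by
    rw [Qpoly, Polynomial.sum_comp]
    apply sum_congr rfl
    intro t _
    rw [smul_comp]
  have lhs_eq : (Qpoly α (r+1)).comp (X+1) - Qpoly α (r+1)
      = ∑ t ∈ range (2*r+3), qc α (r+1) t • ((bpoly t).comp (X+1) - bpoly t) := by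
    rw [hcomp, Qpoly, ← sum_sub_distrib]
    apply sum_congr (by rw [show 2*(r+1)+1 = 2*r+3 from by omega])
    intro t _
    rw [smul_sub]
  rw [lhs_eq]
  rw [sum_range_succ' _ (2*r+2)]
  have h0 : qc α (r+1) 0 • ((bpoly 0).comp (X+1) - bpoly 0) = 0 := by
    rw [qc_zero_right, zero_smul]
  rw [h0, add_zero]
  have hstep : ∀ s ∈ range (2*r+2), qc α (r+1) (s+1) • ((bpoly (s+1)).comp (X+1) - bpoly (s+1))
      = ((if s = 0 then 0 else qc α r (s-1)) + ((s:ℝ)+1-α) * qc α r s) • bpoly s := by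
    intro s _
    rw [bpoly_diff, smul_smul, qc_succ]
    congr 1
    have : ((s:ℝ)+1) ≠ 0 := by positivity
    field_simp
    ring
  rw [sum_congr rfl hstep]
  -- now the RHS
  rw [Qpoly_ext α r (2*r+2) (by omega), mul_sum]
  have hrhs : ∀ t ∈ range (2*r+2), (X - C (α-1)) * (qc α r t • bpoly t)
      = qc α r t • bpoly (t+1) + (qc α r t * ((t:ℝ)+1-α)) • bpoly t := by
    intro t _
    rw [bpoly_succ, smul_eq_C_mul, smul_eq_C_mul, smul_eq_C_mul]
    simp only [map_sub, map_add, map_mul, C_1]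
    ring
  rw [sum_congr rfl hrhs, sum_add_distrib]
  have hreindex : ∑ t ∈ range (2*r+2), qc α r t • bpoly (t+1)
      = ∑ s ∈ range (2*r+2), (if s = 0 then (0:ℝ) else qc α r (s-1)) • bpoly s := by
    have := sum_range_succ' (fun s => (if s = 0 then (0:ℝ) else qc α r (s-1)) • bpoly s) (2*r+2)
    rw [if_pos rfl, zero_smul, add_zero] at this
    have h2 : ∑ s ∈ range (2*r+3), (if s = 0 then (0:ℝ) else qc α r (s-1)) • bpoly s
        = ∑ s ∈ range (2*r+2), (if s = 0 then (0:ℝ) else qc α r (s-1)) • bpoly s := by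
      rw [sum_range_succ, if_neg (by omega)]
      have : qc α r (2*r+2-1) = 0 := qc_eq_zero α r _ (by omega)
      rw [this, zero_smul, add_zero]
    rw [← h2, this]
    apply sum_congr rfl
    intro t _
    simp
  rw [hreindex, ← sum_add_distrib]
  apply sum_congr rfl
  intro s _
  rw [← add_smul]
  congr 1
  ring

def Ppoly (α : ℝ) (i : ℕ) : ℝ[X] := ∏ j ∈ range i, (1 - C (α - (j+1)) * X)

lemma eval_bpoly_zero (t : ℕ) (ht : 1 ≤ t) : (bpoly t).eval 0 = 0 := by
  rw [bpoly, eval_prod]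
  apply prod_eq_zero (Finset.mem_range.mpr (by omega : 0 < t))
  simp

lemma qc_zero_col (α : ℝ) (r : ℕ) : qc α r 0 = if r = 0 then 1 else 0 := by
  cases r with
  | zero => rfl
  | succ r => rfl

lemma coeff_Ppoly (α : ℝ) : ∀ i r, (Ppoly α i).coeff r = (Qpoly α r).eval (i:ℝ) := by
  intro i
  induction i with
  | zero =>
    intro r
    have : Ppoly α 0 = 1 := by simp [Ppoly]
    rw [this]
    have hq : (Qpoly α r).eval 0 = qc α r 0 := by
      rw [Qpoly, eval_finset_sum]
      rw [sum_eq_single 0]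
      · simp [bpoly]
      · intro t _ ht
        rw [eval_smul, eval_bpoly_zero t (by omega), smul_eq_mul, mul_zero]
      · simp
    rw [Nat.cast_zero, hq, qc_zero_col, coeff_one]
  | succ i ih =>
    intro r
    have hP : Ppoly α (i+1) = Ppoly α i - C (α - (i+1)) * (Ppoly α i * X) := by
      rw [Ppoly, prod_range_succ, ← Ppoly]
      ring
    cases r with
    | zero =>
      rw [hP, coeff_sub, coeff_C_mul, coeff_mul_X_zero, mul_zero, sub_zero, ih 0]
      simp [Qpoly_zero]
    | succ s =>
      rw [hP, coeff_sub, coeff_C_mul, coeff_mul_X, ih (s+1), ih s]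
      have key := Qpoly_diff α s
      have h := congrArg (fun p => p.eval (i:ℝ)) key
      simp only [eval_sub, eval_mul, eval_comp, eval_add, eval_X, eval_C, eval_one] at h
      have h3 : (Qpoly α (s+1)).eval ((i:ℝ)+1)
          = (Qpoly α (s+1)).eval (i:ℝ) + ((i:ℝ) - (α-1)) * (Qpoly α s).eval (i:ℝ) := by
        linarith [h]
      push_cast
      rw [h3]
      ring

/-- top diagonal of `qc` -/
lemma qc_top (α : ℝ) : ∀ r, qc α r (2*r) = 1/(2^r * r.factorial) := by
  intro r
  induction r with
  | zero => simp [qc]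
  | succ r ih =>
    have h2 : 2*(r+1) = (2*r+1)+1 := by omega
    rw [h2, qc_succ]
    rw [if_neg (by omega)]
    have e1 : 2*r+1-1 = 2*r := by omega
    rw [e1, ih, qc_eq_zero α r (2*r+1) (by omega)]
    have : ((2:ℝ)^r * r.factorial) ≠ 0 := by positivity
    rw [Nat.factorial_succ]
    push_cast
    field_simp
    ring

/-- subdiagonal of `qc`: the crucial closed form -/
lemma qc_sub (α : ℝ) : ∀ r, qc α (r+1) (2*r+1) = -(α - (2*(r:ℝ)+3)/3) / (2^r * r.factorial) := by
  intro r
  induction r with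
  | zero =>
    rw [show 2*0+1 = 0+1 from rfl, qc_succ]
    have h0 : qc α 0 0 = 1 := rfl
    rw [if_pos rfl, h0]
    norm_num
  | succ r ih =>
    have h2 : 2*(r+1)+1 = (2*r+2)+1 := by omega
    rw [h2, qc_succ, if_neg (by omega)]
    have e1 : 2*r+2-1 = 2*r+1 := by omega
    rw [e1, ih]
    have e2 : (2*r+2) = 2*(r+1) := by omega
    rw [e2, qc_top]
    have h3 : ((2:ℝ)^r * r.factorial) ≠ 0 := by positivity
    have h4 : ((2:ℝ)^(r+1) * (r+1).factorial) ≠ 0 := by positivity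
    have h5 : ((2:ℝ)*r+2+1) ≠ 0 := by positivity
    rw [Nat.factorial_succ]
    push_cast
    field_simp
    ring

def gpoly (α : ℝ) (d : ℕ) : ℝ[X] :=
  ∑ i ∈ range (d+1), ((-1:ℝ)^i * (d.choose i)) • Ppoly α i

lemma coeff_gpoly (α : ℝ) (d r : ℕ) : (gpoly α d).coeff r = altsum d (Qpoly α r) := by
  rw [gpoly, finset_sum_coeff, altsum]
  apply sum_congr rfl
  intro i _
  rw [coeff_smul, coeff_Ppoly, smul_eq_mul]

lemma coeff_gpoly_lt (α : ℝ) (d r : ℕ) (h : 2*r < d) : (gpoly α d).coeff r = 0 := by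
  rw [coeff_gpoly]
  exact altsum_eq_zero_of_natDegree_lt d _ (lt_of_le_of_lt (natDegree_Qpoly_le α r) h)

lemma altsum_finset_sum (d : ℕ) (F : Finset ℕ) (f : ℕ → ℝ[X]) :
    altsum d (∑ t ∈ F, f t) = ∑ t ∈ F, altsum d (f t) := by
  unfold altsum
  simp only [eval_finset_sum, mul_sum]
  exact Finset.sum_comm

lemma altsum_Qpoly (α : ℝ) (s : ℕ) :
    altsum (2*s+1) (Qpoly α (s+1)) = qc α (s+1) (2*s+1) * ((-1:ℝ)^(2*s+1) * (2*s+1).factorial) := by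
  have hQ : Qpoly α (s+1) = ∑ t ∈ range (2*(s+1)+1), qc α (s+1) t • bpoly t := rfl
  rw [hQ, altsum_finset_sum]
  have hterm : ∀ t ∈ range (2*(s+1)+1), altsum (2*s+1) (qc α (s+1) t • bpoly t)
      = qc α (s+1) t * altsum (2*s+1) (bpoly t) := fun t _ => altsum_smul _ _ _
  rw [sum_congr rfl hterm]
  rw [show 2*(s+1)+1 = (2*s+1)+1+1 from by omega]
  rw [sum_range_succ, sum_range_succ]
  have hz : ∀ t ∈ range (2*s+1), qc α (s+1) t * altsum (2*s+1) (bpoly t) = 0 := by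
    intro t ht
    rw [altsum_eq_zero_of_natDegree_lt (2*s+1) _ (by rw [natDegree_bpoly]; exact mem_range.mp ht), mul_zero]
  rw [sum_eq_zero hz, altsum_bpoly_self, altsum_bpoly_succ, mul_zero, add_zero, zero_add]

/-- The critical coefficient of `gpoly`. -/
lemma coeff_gpoly_crit (α : ℝ) (s : ℕ) :
    (gpoly α (2*s+1)).coeff (s+1)
      = (α - (2*(s:ℝ)+3)/3) * ((2*s+1).factorial / (2^s * s.factorial)) := by
  rw [coeff_gpoly, altsum_Qpoly, qc_sub]
  have h3 : ((2:ℝ)^s * s.factorial) ≠ 0 := by positivity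
  rw [pow_succ, pow_mul]
  norm_num
  field_simp
  ring

/-- `(2s+1)! / (2^s s!) = (2s+1)!!` -/
lemma doublefact (s : ℕ) :
    ((2*s+1).factorial : ℝ) / (2^s * s.factorial) = ∏ j ∈ range (s+1), (2*(j:ℝ)+1) := by
  induction s with
  | zero => simp
  | succ s ih =>
    rw [prod_range_succ, ← ih, show 2*(s+1)+1 = 2*s+1+1+1 from by omega, pow_succ]
    have h3 : ((2:ℝ)^s * s.factorial) ≠ 0 := by positivity
    push_cast [Nat.factorial_succ]
    field_simp
    ring

/-- cast of descFactorial splitting off the last `i` factors -/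
lemma descFactorial_split (N n i : ℕ) (hin : i ≤ n) (hnN : n ≤ N) :
    ((N.descFactorial n : ℕ) : ℝ)
      = (N.descFactorial (n-i) : ℝ) * ∏ j ∈ range i, ((N:ℝ) - ((n:ℝ) - (j:ℝ) - 1)) := by
  induction i with
  | zero => simp
  | succ i ih =>
    have h1 : i ≤ n := by omega
    rw [ih h1, prod_range_succ]
    have h2 : n - i = (n - i - 1) + 1 := by omega
    rw [h2, Nat.descFactorial_succ]
    have h3 : ((N - (n-i-1) : ℕ) : ℝ) = (N:ℝ) - ((n:ℝ) - (i:ℝ) - 1) := by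
      have : (n - i - 1 : ℕ) ≤ N := by omega
      push_cast [Nat.cast_sub this, Nat.cast_sub (show (1:ℕ) ≤ n - i by omega),
        Nat.cast_sub (show i ≤ n by omega)]
      ring
    have h4 : n - i - 1 = n - (i+1) := by omega
    rw [Nat.cast_mul, h3, h4]
    push_cast
    ring

lemma Ppoly_eval_inv (α : ℝ) (i : ℕ) (N : ℕ) (hN : 1 ≤ N) :
    (Ppoly α i).eval (1/(N:ℝ)) = (∏ j ∈ range i, ((N:ℝ) - (α - (j:ℝ) - 1))) / (N:ℝ)^i := by
  have hN0 : (N:ℝ) ≠ 0 := by positivity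
  rw [Ppoly, eval_prod,
    show ((N:ℝ))^i = ∏ _j ∈ range i, (N:ℝ) from by rw [prod_const, card_range],
    ← prod_div_distrib]
  apply prod_congr rfl
  intro j _
  rw [eval_sub, eval_mul, eval_C, eval_X, eval_one]
  field_simp
  ring

/-- the basic per-term identity -/
lemma descFactorial_cast_ne (N m : ℕ) (h : m ≤ N) : ((N.descFactorial m : ℕ) : ℝ) ≠ 0 := by
  have : N.descFactorial m ≠ 0 := by
    intro h0
    have := Nat.descFactorial_eq_zero_iff_lt.mp h0
    omega
  exact_mod_cast this

lemma term_eq (n i N : ℕ) (hin : i ≤ n) (hnN : n ≤ N) (hN : 1 ≤ N) :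
    ((N:ℝ)^i)⁻¹ / (N.descFactorial (n-i) : ℝ)
      = (Ppoly (n:ℝ) i).eval (1/(N:ℝ)) / (N.descFactorial n : ℝ) := by
  have hN0 : ((N:ℝ)) ≠ 0 := by positivity
  have hd1 : ((N.descFactorial (n-i) : ℕ) : ℝ) ≠ 0 := descFactorial_cast_ne N (n-i) (by omega)
  have hd2 : ((N.descFactorial n : ℕ) : ℝ) ≠ 0 := descFactorial_cast_ne N n hnN
  rw [Ppoly_eval_inv _ _ _ hN]
  rw [div_div, eq_div_iff (by positivity)]
  rw [descFactorial_split N n i hin hnN]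
  field_simp

lemma descFactorial_cast_prod (N n : ℕ) (h : n ≤ N) :
    ((N.descFactorial n : ℕ) : ℝ) = ∏ j ∈ range n, ((N:ℝ) - (j:ℝ)) := by
  induction n with
  | zero => simp
  | succ m ih =>
    rw [Nat.descFactorial_succ, prod_range_succ, ← ih (by omega), Nat.cast_mul,
      Nat.cast_sub (by omega : m ≤ N)]
    ring

/-- `N^n / (N)_n → 1` -/
lemma tendsto_pow_div_descFactorial (n : ℕ) :
    Tendsto (fun N : ℕ => (N:ℝ)^n / (N.descFactorial n : ℝ)) atTop (nhds 1) := by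
  have key : ∀ j : ℕ, Tendsto (fun N : ℕ => (N:ℝ) / ((N:ℝ) - (j:ℝ))) atTop (nhds 1) := by
    intro j
    have h1 : Tendsto (fun N : ℕ => ((N:ℝ) - (j:ℝ)) / (N:ℝ)) atTop (nhds 1) := by
      have h2 : Tendsto (fun N : ℕ => 1 - (j:ℝ) * (1/(N:ℝ))) atTop (nhds 1) := by
        have := tendsto_one_div_atTop_nhds_zero_nat (𝕜 := ℝ)
        have h3 := Tendsto.const_mul (j:ℝ) this
        have h4 := Tendsto.const_sub (1:ℝ) h3
        simpa using h4
      apply h2.congr'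
      filter_upwards [eventually_gt_atTop 0] with N hN
      have : (N:ℝ) ≠ 0 := by positivity
      field_simp
    have h5 := h1.inv₀ (by norm_num)
    simp only [inv_one] at h5
    apply h5.congr'
    filter_upwards [eventually_gt_atTop j, eventually_gt_atTop 0] with N hN hN1
    have hN0 : (N:ℝ) ≠ 0 := by positivity
    have : (N:ℝ) - (j:ℝ) ≠ 0 := by
      have : (j:ℝ) < (N:ℝ) := by exact_mod_cast hN
      linarith
    rw [inv_div]
  have hprod : Tendsto (fun N : ℕ => ∏ j ∈ range n, ((N:ℝ) / ((N:ℝ) - (j:ℝ)))) atTop (nhds 1) := by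
    have := tendsto_finset_prod (range n) (fun j _ => key j)
    simpa using this
  apply hprod.congr'
  filter_upwards [eventually_ge_atTop n] with N hN
  rw [descFactorial_cast_prod N n hN, prod_div_distrib, prod_const, card_range]

lemma tendsto_pow_div_descFactorial_zero (m n : ℕ) (h : m < n) :
    Tendsto (fun N : ℕ => (N:ℝ)^m / (N.descFactorial n : ℝ)) atTop (nhds 0) := by
  have h1 : Tendsto (fun N : ℕ => (1/(N:ℝ))^(n-m)) atTop (nhds 0) := by
    have := (tendsto_one_div_atTop_nhds_zero_nat (𝕜 := ℝ)).pow (n-m)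
    rwa [zero_pow (by omega : n - m ≠ 0)] at this
  have h2 := h1.mul (tendsto_pow_div_descFactorial n)
  rw [zero_mul] at h2
  apply h2.congr'
  filter_upwards [eventually_ge_atTop n, eventually_ge_atTop 1] with N hN hN1
  have hN0 : (N:ℝ) ≠ 0 := by positivity
  have hsp : (N:ℝ)^n = (N:ℝ)^m * (N:ℝ)^(n-m) := by
    rw [← pow_add]
    congr 1
    omega
  rw [hsp]
  field_simp
  rw [← mul_pow, one_div_mul_cancel hN0, one_pow]

lemma tendsto_pow_mul_eval (p : ℝ[X]) (m : ℕ) (hvan : ∀ r < m, p.coeff r = 0) :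
    Tendsto (fun N : ℕ => (N:ℝ)^m * p.eval (1/(N:ℝ))) atTop (nhds (p.coeff m)) := by
  obtain ⟨h, hh⟩ := X_pow_dvd_iff.mpr hvan
  have hcoeff : p.coeff m = h.coeff 0 := by
    rw [hh]
    simpa using coeff_X_pow_mul h m 0
  have hcont : Tendsto (fun N : ℕ => h.eval (1/(N:ℝ))) atTop (nhds (h.coeff 0)) := by
    have hc : Continuous fun x : ℝ => h.eval x := h.continuous
    have := (hc.tendsto 0).comp tendsto_one_div_atTop_nhds_zero_nat
    simpa [coeff_zero_eq_eval_zero, Function.comp_def] using this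
  rw [hcoeff]
  apply hcont.congr'
  filter_upwards [eventually_ge_atTop 1] with N hN1
  have hN0 : (N:ℝ) ≠ 0 := by positivity
  rw [hh, eval_mul, eval_pow, eval_X]
  field_simp
  rw [mul_assoc, ← mul_pow, mul_one_div_cancel hN0, one_pow, mul_one]

/-- the limit of the scaled inner sum, for a partition with `n` blocks. -/
lemma tendsto_inner (d s n n₀ : ℕ) (hd : d = 2*s+1) (hdn : d ≤ n₀) (hn : n₀ ≤ n) :
    Tendsto (fun N : ℕ => (N:ℝ)^(n₀+(s+1)) *
        ∑ i ∈ range (d+1), (-1:ℝ)^i * (d.choose i) * (((N:ℝ)^i)⁻¹ / (N.descFactorial (n-i) : ℝ)))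
      atTop (nhds ((if n₀ = n then 1 else 0) *
        (((n:ℝ) - (2*(s:ℝ)+3)/3) * ∏ j ∈ range (s+1), (2*(j:ℝ)+1)))) := by
  have hvan : ∀ r < s+1, (gpoly (n:ℝ) d).coeff r = 0 := by
    intro r hr
    exact coeff_gpoly_lt _ _ _ (by omega)
  have hB : Tendsto (fun N : ℕ => (N:ℝ)^(s+1) * (gpoly (n:ℝ) d).eval (1/(N:ℝ))) atTop
      (nhds (((n:ℝ) - (2*(s:ℝ)+3)/3) * ∏ j ∈ range (s+1), (2*(j:ℝ)+1))) := by
    have := tendsto_pow_mul_eval (gpoly (n:ℝ) d) (s+1) hvan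
    rw [hd] at this ⊢
    rwa [coeff_gpoly_crit, doublefact] at this
  have hA : Tendsto (fun N : ℕ => (N:ℝ)^n₀ / (N.descFactorial n : ℝ)) atTop
      (nhds (if n₀ = n then 1 else 0)) := by
    rcases eq_or_ne n₀ n with rfl | hne
    · rw [if_pos rfl]; exact tendsto_pow_div_descFactorial n₀
    · rw [if_neg hne]; exact tendsto_pow_div_descFactorial_zero n₀ n (by omega)
  have := hA.mul hB
  apply this.congr'
  filter_upwards [eventually_ge_atTop n, eventually_ge_atTop 1] with N hNn hN1
  have hN0 : (N:ℝ) ≠ 0 := by positivity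
  -- rewrite each term
  have hterm : ∀ i ∈ range (d+1),
      (-1:ℝ)^i * (d.choose i) * (((N:ℝ)^i)⁻¹ / (N.descFactorial (n-i) : ℝ))
        = ((-1:ℝ)^i * (d.choose i)) * (Ppoly (n:ℝ) i).eval (1/(N:ℝ)) / (N.descFactorial n : ℝ) := by
    intro i hi
    rw [term_eq n i N (by simp at hi; omega) hNn hN1]
    ring
  rw [sum_congr rfl hterm, ← sum_div]
  have hg : ∑ i ∈ range (d+1), ((-1:ℝ)^i * (d.choose i)) * (Ppoly (n:ℝ) i).eval (1/(N:ℝ))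
      = (gpoly (n:ℝ) d).eval (1/(N:ℝ)) := by
    rw [gpoly, eval_finset_sum]
    apply sum_congr rfl
    intro i _
    rw [eval_smul, smul_eq_mul]
  rw [hg]
  rw [pow_add]
  have hdF : ((N.descFactorial n : ℕ) : ℝ) ≠ 0 := descFactorial_cast_ne N n hNn
  field_simp
  ring

end WgAux

instance finSetoid (k : ℕ) : Finite (Setoid (Fin k)) := by
  apply Finite.of_injective (fun s : Setoid (Fin k) => s.r)
  intro s t h
  apply Setoid.ext
  intro a b
  exact iff_of_eq (congrFun (congrFun h a) b)

variable {k : ℕ}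

/-- natural map between quotients of comparable setoids -/
def qmap (π ρ : Setoid (Fin k)) (h : π ≤ ρ) : Quotient π → Quotient ρ :=
  Quotient.map' id (fun a b hab => h hab)

lemma qmap_mk (π ρ : Setoid (Fin k)) (h : π ≤ ρ) (a : Fin k) :
    qmap π ρ h (Quotient.mk π a) = Quotient.mk ρ a := rfl

lemma qmap_surjective (π ρ : Setoid (Fin k)) (h : π ≤ ρ) :
    Function.Surjective (qmap π ρ h) := by
  intro q
  obtain ⟨a, rfl⟩ := Quotient.exists_rep q
  exact ⟨Quotient.mk π a, rfl⟩

lemma numBlocks_le (π ρ : Setoid (Fin k)) (h : π ≤ ρ) : numBlocks ρ ≤ numBlocks π :=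
  Nat.card_le_card_of_surjective _ (qmap_surjective π ρ h)

lemma numBlocks_lt (π ρ : Setoid (Fin k)) (h : π ≤ ρ) (hne : π ≠ ρ) :
    numBlocks ρ < numBlocks π := by
  rcases lt_or_eq_of_le (numBlocks_le π ρ h) with hlt | heq
  · exact hlt
  exfalso
  apply hne
  have hbij : Function.Bijective (qmap π ρ h) :=
    (Nat.bijective_iff_surjective_and_card _).mpr ⟨qmap_surjective π ρ h, heq.symm⟩
  apply le_antisymm h
  intro a b hab
  have : qmap π ρ h (Quotient.mk π a) = qmap π ρ h (Quotient.mk π b) := by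
    rw [qmap_mk, qmap_mk]
    exact Quotient.sound hab
  have := hbij.injective this
  exact Quotient.exact this

lemma numSingletons_le_numBlocks (σ τ : Setoid (Fin k)) :
    numSingletons (σ ⊔ τ) ≤ numBlocks (σ ⊓ τ) := by
  apply Nat.card_le_card_of_injective
    (fun j : {j : Fin k | ∀ m, (σ ⊔ τ).r j m → m = j} => Quotient.mk (σ ⊓ τ) j.val)
  intro a b hab
  have h1 : (σ ⊓ τ).r a.val b.val := Quotient.exact hab
  have h2 : (σ ⊓ τ) ≤ σ ⊔ τ := le_trans inf_le_left le_sup_left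
  have h3 : (σ ⊔ τ).r a.val b.val := h2 h1
  have := a.prop b.val h3
  exact Subtype.ext this.symm

end WgAuxSection

/-- leading asymptotics of `W̊g_k(σ,τ,N)` when `d = |D(σ∨τ)|` is odd, `d ≠ k`. -/
theorem stmt15 (k : ℕ) (hk : 1 ≤ k) (σ τ : Setoid (Fin k))
    (hd_odd : numSingletons (σ ⊔ τ) % 2 = 1) (hd_ne : numSingletons (σ ⊔ τ) ≠ k) :
    Filter.Tendsto
      (fun N : ℕ =>
        (N : ℝ) ^ (numBlocks (σ ⊓ τ) + (numSingletons (σ ⊔ τ) + 1) / 2) * cWg k N σ τ)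
      Filter.atTop
      (nhds (((mobius (σ ⊓ τ) σ * mobius (σ ⊓ τ) τ : ℤ) : ℝ) *
        ((numBlocks (σ ⊓ τ) : ℝ) - (numSingletons (σ ⊔ τ) : ℝ) / 3 - 2 / 3) *
        ∏ j ∈ Finset.range ((numSingletons (σ ⊔ τ) + 1) / 2), (2 * (j : ℝ) + 1))) := by
  open Filter Polynomial in
  set d := numSingletons (σ ⊔ τ) with hd_def
  obtain ⟨s, hs⟩ : ∃ s, d = 2*s+1 := ⟨d/2, by omega⟩
  set n₀ := numBlocks (σ ⊓ τ) with hn0_def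
  have hdn0 : d ≤ n₀ := numSingletons_le_numBlocks σ τ
  have hS : ({π : Setoid (Fin k) | π ≤ σ ⊓ τ}).Finite := Set.toFinite _
  set T : Finset (Setoid (Fin k)) := hS.toFinset with hT_def
  have hmemT : ∀ π, π ∈ T ↔ π ≤ σ ⊓ τ := by
    intro π
    rw [hT_def, Set.Finite.mem_toFinset, Set.mem_setOf_eq]
  -- rewrite cWg as a sum over T
  have hcWg : ∀ N : ℕ, cWg k N σ τ
      = ∑ π ∈ T, ((mobius π σ * mobius π τ : ℤ) : ℝ) *
          ∑ i ∈ range (d+1), (-1:ℝ)^i * (d.choose i) *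
            (((N:ℝ)^i)⁻¹ / (N.descFactorial (numBlocks π - i) : ℝ)) := by
    intro N
    rw [cWg]
    have hrw : ∀ i ∈ range (d+1),
        ((d.choose i : ℕ) : ℝ) * (-1:ℝ)^i *
          ∑ᶠ π ∈ {π : Setoid (Fin k) | π ≤ σ ⊓ τ},
            ((mobius π σ * mobius π τ : ℤ) : ℝ) * ((N:ℝ)^i)⁻¹
              / (N.descFactorial (numBlocks π - i) : ℝ)
        = ∑ π ∈ T, ((mobius π σ * mobius π τ : ℤ) : ℝ) *
            ((-1:ℝ)^i * (d.choose i) * (((N:ℝ)^i)⁻¹ / (N.descFactorial (numBlocks π - i) : ℝ))) := by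
      intro i _
      rw [finsum_mem_eq_finite_toFinset_sum _ hS, ← hT_def, mul_sum]
      apply sum_congr rfl
      intro π _
      ring
    rw [sum_congr rfl hrw, sum_comm]
    apply sum_congr rfl
    intro π _
    rw [mul_sum]
  -- per-term limits
  have hlim : ∀ π ∈ T, Tendsto
      (fun N : ℕ => (N:ℝ)^(n₀+(s+1)) * (((mobius π σ * mobius π τ : ℤ) : ℝ) *
          ∑ i ∈ range (d+1), (-1:ℝ)^i * (d.choose i) *
            (((N:ℝ)^i)⁻¹ / (N.descFactorial (numBlocks π - i) : ℝ))))
      atTop (nhds (((mobius π σ * mobius π τ : ℤ) : ℝ) *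
        ((if n₀ = numBlocks π then 1 else 0) *
          (((numBlocks π : ℝ) - (2*(s:ℝ)+3)/3) * ∏ j ∈ range (s+1), (2*(j:ℝ)+1))))) := by
    intro π hπ
    have hle : π ≤ σ ⊓ τ := (hmemT π).mp hπ
    have hn : n₀ ≤ numBlocks π := numBlocks_le π (σ ⊓ τ) hle
    have := (WgAux.tendsto_inner d s (numBlocks π) n₀ hs hdn0 hn).const_mul
      ((mobius π σ * mobius π τ : ℤ) : ℝ)
    apply this.congr'
    filter_upwards with N
    ring
  have htot := tendsto_finset_sum T hlim
  -- identify the sum of limits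
  have hmem0 : σ ⊓ τ ∈ T := (hmemT _).mpr le_rfl
  have hsum_lim : ∑ π ∈ T, (((mobius π σ * mobius π τ : ℤ) : ℝ) *
        ((if n₀ = numBlocks π then 1 else 0) *
          (((numBlocks π : ℝ) - (2*(s:ℝ)+3)/3) * ∏ j ∈ range (s+1), (2*(j:ℝ)+1))))
      = ((mobius (σ ⊓ τ) σ * mobius (σ ⊓ τ) τ : ℤ) : ℝ) *
        (((n₀ : ℝ) - (2*(s:ℝ)+3)/3) * ∏ j ∈ range (s+1), (2*(j:ℝ)+1)) := by
    rw [Finset.sum_eq_single (σ ⊓ τ)]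
    · rw [if_pos rfl, one_mul]
    · intro π hπ hne
      have hlt : n₀ < numBlocks π := numBlocks_lt π (σ ⊓ τ) ((hmemT π).mp hπ) hne
      rw [if_neg (by omega), zero_mul, mul_zero]
    · intro h
      exact absurd hmem0 h
  rw [hsum_lim] at htot
  -- final matching
  have hexp : numBlocks (σ ⊓ τ) + (d + 1) / 2 = n₀ + (s+1) := by omega
  have hconst : ((mobius (σ ⊓ τ) σ * mobius (σ ⊓ τ) τ : ℤ) : ℝ) *
        ((n₀ : ℝ) - (d : ℝ) / 3 - 2 / 3) * ∏ j ∈ range ((d+1)/2), (2*(j:ℝ)+1)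
      = ((mobius (σ ⊓ τ) σ * mobius (σ ⊓ τ) τ : ℤ) : ℝ) *
        (((n₀ : ℝ) - (2*(s:ℝ)+3)/3) * ∏ j ∈ range (s+1), (2*(j:ℝ)+1)) := by
    rw [show (d+1)/2 = s+1 from by omega]
    have : (d:ℝ) = 2*(s:ℝ)+1 := by rw [hs]; push_cast; ring
    rw [this]
    ring
  rw [hconst]
  apply htot.congr'
  filter_upwards with N
  rw [hcWg N, mul_sum, hexp]

end WgPerm

end
end

section
/- For all integers 2 ≤ k ≤ N, the centered Weingarten function at the maximal partition satisfies the lower bound W̊g_k(1_k, 1_k, N) ≥ 1/N + (2^{k−1} − 1)/N². -/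
open Finset

noncomputable section

namespace WgPerm

/-! ### Auxiliary lemmas -/

instance instFiniteSetoid {α : Type*} [Finite α] : Finite (Setoid α) :=
  Finite.of_injective (fun s : Setoid α => (s : α → α → Prop))
    fun _ _ h => Setoid.ext fun x y => iff_of_eq (congrFun (congrFun h x) y)

lemma subsingleton_quotient_top {α : Type*} : Subsingleton (Quotient (⊤ : Setoid α)) :=
  ⟨fun a b => Quotient.inductionOn₂ a b fun _ _ => Quotient.sound trivial⟩

lemma lam_top {α : Type*} (π : Setoid α) (B : Quotient (⊤ : Setoid α)) :
    lam π ⊤ B = numBlocks π := by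
  haveI := subsingleton_quotient_top (α := α)
  exact Nat.card_congr (Equiv.subtypeUnivEquiv fun c => Subsingleton.elim _ _)

lemma mobius_top {α : Type*} [Nonempty α] (π : Setoid α) :
    mobius π ⊤ = (-1 : ℤ) ^ (numBlocks π - 1) * (Nat.factorial (numBlocks π - 1) : ℤ) := by
  haveI := subsingleton_quotient_top (α := α)
  haveI : Unique (Quotient (⊤ : Setoid α)) :=
    uniqueOfSubsingleton (Quotient.mk _ (Classical.arbitrary α))
  rw [mobius, finprod_unique, lam_top]

lemma numBlocks_top {α : Type*} [Nonempty α] : numBlocks (⊤ : Setoid α) = 1 := by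
  haveI := subsingleton_quotient_top (α := α)
  haveI : Nonempty (Quotient (⊤ : Setoid α)) :=
    ⟨Quotient.mk _ (Classical.arbitrary α)⟩
  exact Nat.card_unique

lemma numSingletons_top {k : ℕ} (h2 : 2 ≤ k) :
    numSingletons (⊤ : Setoid (Fin k)) = 0 := by
  haveI : Nontrivial (Fin k) := Fin.nontrivial_iff_two_le.mpr h2
  haveI : IsEmpty {j : Fin k | ∀ m, (⊤ : Setoid (Fin k)).r j m → m = j} := by
    constructor
    rintro ⟨j, hj⟩
    obtain ⟨m, hm⟩ := exists_ne j
    exact hm (hj m trivial)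
  exact Nat.card_of_isEmpty

/-- The two-block setoid determined by a subset. -/
def bsetoid {k : ℕ} (S : Finset (Fin k)) : Setoid (Fin k) :=
  Setoid.ker (fun j => decide (j ∈ S))

lemma bsetoid_rel {k : ℕ} (S : Finset (Fin k)) (x y : Fin k) :
    bsetoid S x y ↔ ((x ∈ S) ↔ (y ∈ S)) := by
  change decide (x ∈ S) = decide (y ∈ S) ↔ _
  simp [bsetoid, Setoid.ker_def, decide_eq_decide]

lemma numBlocks_bsetoid {k : ℕ} {S : Finset (Fin k)} {a b : Fin k}
    (ha : a ∈ S) (hb : b ∉ S) : numBlocks (bsetoid S) = 2 := by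
  have hsurj : Function.Surjective (fun j : Fin k => decide (j ∈ S)) := by
    intro c
    cases c
    · exact ⟨b, by simp [hb]⟩
    · exact ⟨a, by simp [ha]⟩
  unfold numBlocks bsetoid
  rw [Nat.card_congr (Setoid.quotientKerEquivRange _),
    Set.range_eq_univ.mpr hsurj, Nat.card_congr (Equiv.Set.univ Bool)]
  simp [Nat.card_eq_fintype_card]

lemma bsetoid_ne_top {k : ℕ} {S : Finset (Fin k)} {a b : Fin k}
    (ha : a ∈ S) (hb : b ∉ S) : bsetoid S ≠ (⊤ : Setoid (Fin k)) := by
  intro h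
  have : bsetoid S a b := by rw [h]; trivial
  rw [bsetoid_rel] at this
  exact hb (this.mp ha)

lemma bsetoid_inj {k : ℕ} {S T : Finset (Fin k)} {z : Fin k} (hS : z ∈ S) (hT : z ∈ T)
    (h : bsetoid S = bsetoid T) : S = T := by
  ext x
  have hx : ((x ∈ S) ↔ (z ∈ S)) ↔ ((x ∈ T) ↔ (z ∈ T)) := by
    rw [← bsetoid_rel, ← bsetoid_rel, h]
  tauto

/-- lower bound for the centered Weingarten function at the maximal partition. -/
theorem stmt19 (k N : ℕ) (h2 : 2 ≤ k) (hkN : k ≤ N) :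
    1 / (N : ℝ) + ((2 : ℝ) ^ (k - 1) - 1) / (N : ℝ) ^ 2 ≤
      cWg k N (⊤ : Setoid (Fin k)) (⊤ : Setoid (Fin k)) := by
  classical
  haveI : NeZero k := ⟨by omega⟩
  haveI : Nonempty (Fin k) := ⟨0⟩
  haveI : Fintype (Setoid (Fin k)) := Fintype.ofFinite _
  have hN2 : 2 ≤ N := le_trans h2 hkN
  set F : Setoid (Fin k) → ℝ := fun π =>
    ((mobius π ⊤ * mobius π ⊤ : ℤ) : ℝ) / (Nat.descFactorial N (numBlocks π) : ℝ) with hF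
  have key : cWg k N (⊤ : Setoid (Fin k)) ⊤ = ∑ π : Setoid (Fin k), F π := by
    rw [cWg]
    have h0 : numSingletons ((⊤ : Setoid (Fin k)) ⊔ ⊤) = 0 := by
      rw [sup_idem]; exact numSingletons_top h2
    rw [h0, Finset.sum_range_one]
    have hset : {π : Setoid (Fin k) | π ≤ ⊤ ⊓ ⊤} = Set.univ := by
      ext π; simp
    rw [hset, finsum_mem_univ, finsum_eq_sum_of_fintype]
    simp [hF]
  rw [key]
  -- the family of subsets indexing two-block partitions
  set A : Finset (Finset (Fin k)) :=
    ((Finset.univ.erase (0 : Fin k)).powerset.image (insert (0 : Fin k))).erase Finset.univ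
    with hA
  have hmemA : ∀ S ∈ A, (0 : Fin k) ∈ S ∧ S ≠ Finset.univ := by
    intro S hS
    rw [hA, Finset.mem_erase, Finset.mem_image] at hS
    obtain ⟨hne, s, hs, rfl⟩ := hS
    exact ⟨Finset.mem_insert_self _ _, hne⟩
  have hnotmem : ∀ s ∈ (Finset.univ.erase (0 : Fin k)).powerset, (0 : Fin k) ∉ s := by
    intro s hs h0
    exact (Finset.mem_erase.mp (Finset.mem_powerset.mp hs h0)).1 rfl
  have hcardA : A.card = 2 ^ (k - 1) - 1 := by
    rw [hA, Finset.card_erase_of_mem, Finset.card_image_of_injOn, Finset.card_powerset,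
      Finset.card_erase_of_mem (Finset.mem_univ _), Finset.card_univ, Fintype.card_fin]
    · intro s hs t ht hst
      have h0s := hnotmem s (Finset.mem_coe.mp hs)
      have h0t := hnotmem t (Finset.mem_coe.mp ht)
      rw [← Finset.erase_insert h0s, ← Finset.erase_insert h0t, hst]
    · exact Finset.mem_image.mpr ⟨Finset.univ.erase 0, Finset.mem_powerset.mpr le_rfl,
        Finset.insert_erase (Finset.mem_univ _)⟩
  -- each S in A gives a two-block partition
  have hex : ∀ S ∈ A, ∃ b, b ∉ S := by
    intro S hS
    by_contra h
    push_neg at h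
    exact (hmemA S hS).2 (Finset.eq_univ_iff_forall.mpr h)
  have hnb : ∀ S ∈ A, numBlocks (bsetoid S) = 2 := by
    intro S hS
    obtain ⟨b, hb⟩ := hex S hS
    exact numBlocks_bsetoid (hmemA S hS).1 hb
  have htopnot : (⊤ : Setoid (Fin k)) ∉ A.image bsetoid := by
    intro h
    obtain ⟨S, hS, hSeq⟩ := Finset.mem_image.mp h
    obtain ⟨b, hb⟩ := hex S hS
    exact bsetoid_ne_top (hmemA S hS).1 hb hSeq
  have hFnn : ∀ π : Setoid (Fin k), 0 ≤ F π := by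
    intro π
    apply div_nonneg _ (Nat.cast_nonneg _)
    exact_mod_cast mul_self_nonneg (mobius π ⊤)
  have hsub : (insert (⊤ : Setoid (Fin k)) (A.image bsetoid)) ⊆ Finset.univ :=
    Finset.subset_univ _
  have hsum : ∑ π ∈ insert (⊤ : Setoid (Fin k)) (A.image bsetoid), F π
      ≤ ∑ π : Setoid (Fin k), F π :=
    Finset.sum_le_sum_of_subset_of_nonneg hsub (fun i _ _ => hFnn i)
  refine le_trans ?_ hsum
  rw [Finset.sum_insert htopnot,
    Finset.sum_image (fun x hx y hy h => bsetoid_inj (hmemA x hx).1 (hmemA y hy).1 h)]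
  -- compute F ⊤
  have hFtop : F ⊤ = 1 / (N : ℝ) := by
    rw [hF]
    simp [mobius_top, numBlocks_top]
  -- compute F (bsetoid S)
  have hFb : ∀ S ∈ A, F (bsetoid S) = 1 / ((N : ℝ) * ((N : ℝ) - 1)) := by
    intro S hS
    rw [hF]
    simp only [mobius_top, hnb S hS]
    norm_num
    rw [Nat.cast_sub (by omega : 1 ≤ N)]
    push_cast
    ring
  rw [hFtop, Finset.sum_congr rfl hFb, Finset.sum_const, hcardA]
  have hc : ((2 ^ (k - 1) - 1 : ℕ) : ℝ) = (2 : ℝ) ^ (k - 1) - 1 := by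
    push_cast [Nat.cast_sub (Nat.one_le_two_pow)]
    ring
  rw [nsmul_eq_mul, hc]
  have h1 : (0 : ℝ) ≤ (2 : ℝ) ^ (k - 1) - 1 := by
    have : (1 : ℝ) ≤ 2 ^ (k - 1) := one_le_pow₀ (by norm_num)
    linarith
  have hNpos : (0 : ℝ) < N := by positivity
  have hN1 : (1 : ℝ) ≤ (N : ℝ) - 1 := by
    have : (2 : ℝ) ≤ N := by exact_mod_cast hN2
    linarith
  have hden : (0 : ℝ) < (N : ℝ) * ((N : ℝ) - 1) := by nlinarith
  have hle : (N : ℝ) * ((N : ℝ) - 1) ≤ (N : ℝ) ^ 2 := by nlinarith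
  have : ((2 : ℝ) ^ (k - 1) - 1) / (N : ℝ) ^ 2
      ≤ ((2 : ℝ) ^ (k - 1) - 1) * (1 / ((N : ℝ) * ((N : ℝ) - 1))) := by
    rw [mul_one_div]
    exact div_le_div_of_nonneg_left h1 hden hle
  linarith

end WgPerm
end
end
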